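/- arXiv:2011.14460 — 3 statements merged into one kernel-verified Lean document; each statement's English description precedes it below -/
import Mathlib

section
/- Let T be a sequence of length n over 𝔸, let I be a nonempty finite itemset, and let 1 ≤ x ≤ n. Then co(T,I,x) = (n − x + 1) − Σ_{k=x}^{n} (k − x + 1) · H[k], where H is the gap histogram of T with respect to I. -/
/-- `I` co-occurs in the window `ω(i,x) = {i-x+1, …, i}` of `T`. -/
def coOccursIn {𝔸 : Type*} {n : ℕ} (T : Fin n → 𝔸) (I : Finset 𝔸) (i x : ℕ) : Prop :=
  ∀ e ∈ I, ∃ j : Fin n, i + 1 - x ≤ (j : ℕ) ∧ (j : ℕ) ≤ i ∧ T j = e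

/-- `co(T,I,x)` : the number of indices `i ∈ {x-1, …, n-1}` such that `I` co-occurs
in the window `ω(i,x)`. -/
noncomputable def coCount {𝔸 : Type*} {n : ℕ} (T : Fin n → 𝔸) (I : Finset 𝔸) (x : ℕ) : ℕ :=
  {i : ℕ | x - 1 ≤ i ∧ i ≤ n - 1 ∧ coOccursIn T I i x}.ncard

/-- The interval `{a, …, b} ⊆ {0, …, n-1}` is an `A`-gap of `T` :
none of its entries lies in `A`. -/
def IsGap {𝔸 : Type*} {n : ℕ} (T : Fin n → 𝔸) (A : Finset 𝔸) (a b : ℕ) : Prop :=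
  a ≤ b ∧ b < n ∧ ∀ j : Fin n, a ≤ (j : ℕ) → (j : ℕ) ≤ b → T j ∉ A

/-- A maximal `A`-gap : an `A`-gap not properly contained in any other `A`-gap. -/
def IsMaxGap {𝔸 : Type*} {n : ℕ} (T : Fin n → 𝔸) (A : Finset 𝔸) (a b : ℕ) : Prop :=
  IsGap T A a b ∧ ∀ a' b', IsGap T A a' b' → a' ≤ a → b ≤ b' → a' = a ∧ b' = b

/-- `N_A(k)` : the number of maximal `A`-gaps of length `k`. -/
noncomputable def gapCount {𝔸 : Type*} {n : ℕ} (T : Fin n → 𝔸) (A : Finset 𝔸) (k : ℕ) : ℕ :=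
  {p : ℕ × ℕ | IsMaxGap T A p.1 p.2 ∧ p.2 - p.1 + 1 = k}.ncard

/-- The gap histogram `H[k] = Σ_{∅ ≠ A ⊆ I} (-1)^(|A|+1) N_A(k)`. -/
noncomputable def gapHistogram {𝔸 : Type*} [DecidableEq 𝔸] {n : ℕ} (T : Fin n → 𝔸)
    (I : Finset 𝔸) (k : ℕ) : ℤ :=
  ∑ A ∈ I.powerset.filter (fun A => A.Nonempty),
    (-1 : ℤ) ^ (A.card + 1) * (gapCount T A k : ℤ)

section Aux
variable {𝔸 : Type*} [DecidableEq 𝔸] {n : ℕ} (T : Fin n → 𝔸) (A : Finset 𝔸)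

lemma gap_sub {a b a' b' : ℕ} (h : IsGap T A a b) (h1 : a ≤ a') (h2 : a' ≤ b') (h3 : b' ≤ b) :
    IsGap T A a' b' :=
  ⟨h2, lt_of_le_of_lt h3 h.2.1, fun j hj1 hj2 => h.2.2 j (le_trans h1 hj1) (le_trans hj2 h3)⟩

lemma exists_max_gap {a b : ℕ} (h : IsGap T A a b) :
    ∃ a' b', IsMaxGap T A a' b' ∧ a' ≤ a ∧ b ≤ b' := by
  set S1 : Set ℕ := {c | IsGap T A c b} with hS1
  have hane : S1.Nonempty := ⟨a, h⟩
  set a' := sInf S1 with ha'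
  have ha'mem : IsGap T A a' b := Nat.sInf_mem hane
  have ha'le : a' ≤ a := Nat.sInf_le h
  set S2 : Set ℕ := {d | IsGap T A a' d} with hS2
  have hbne : S2.Nonempty := ⟨b, ha'mem⟩
  have hbdd : BddAbove S2 := ⟨n, fun d hd => le_of_lt hd.2.1⟩
  set b' := sSup S2 with hb'
  have hb'mem : IsGap T A a' b' := Nat.sSup_mem hbne hbdd
  have hb'ge : b ≤ b' := le_csSup hbdd ha'mem
  refine ⟨a', b', ⟨hb'mem, ?_⟩, ha'le, hb'ge⟩
  intro c d hcd hc hd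
  have hab := h.1
  have hcb : IsGap T A c b := gap_sub T A hcd le_rfl (by omega) (by omega)
  have hc' : a' ≤ c := Nat.sInf_le hcb
  have hc2 : c = a' := le_antisymm hc hc'
  subst hc2
  have : d ≤ b' := le_csSup hbdd hcd
  exact ⟨rfl, le_antisymm this hd⟩

lemma max_gap_unique {a b a1 b1 a2 b2 : ℕ} (h1 : IsMaxGap T A a1 b1) (h2 : IsMaxGap T A a2 b2)
    (ha1 : a1 ≤ a) (hb1 : b ≤ b1) (ha2 : a2 ≤ a) (hb2 : b ≤ b2) (hab : a ≤ b) :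
    a1 = a2 ∧ b1 = b2 := by
  have hu : IsGap T A (min a1 a2) (max b1 b2) := by
    refine ⟨le_trans (min_le_left _ _) (le_trans ha1 (le_trans hab (le_trans hb1 (le_max_left _ _)))), ?_, ?_⟩
    · have := h1.1.2.1; have := h2.1.2.1; omega
    · intro j hj1 hj2
      by_cases hc : a1 ≤ (j : ℕ) ∧ (j : ℕ) ≤ b1
      · exact h1.1.2.2 j hc.1 hc.2
      · have : a2 ≤ (j : ℕ) ∧ (j : ℕ) ≤ b2 := by omega
        exact h2.1.2.2 j this.1 this.2
  have e1 := h1.2 _ _ hu (min_le_left _ _) (le_max_left _ _)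
  have e2 := h2.2 _ _ hu (min_le_right _ _) (le_max_right _ _)
  omega

open scoped Classical in
noncomputable def mgap (a b : ℕ) : ℕ × ℕ :=
  if h : IsGap T A a b then
    ((exists_max_gap T A h).choose, (exists_max_gap T A h).choose_spec.choose)
  else (0, 0)

lemma mgap_spec {a b : ℕ} (h : IsGap T A a b) :
    IsMaxGap T A (mgap T A a b).1 (mgap T A a b).2 ∧ (mgap T A a b).1 ≤ a ∧ b ≤ (mgap T A a b).2 := by
  rw [mgap, dif_pos h]
  exact (exists_max_gap T A h).choose_spec.choose_spec

open scoped Classical in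
lemma avoid_card (x : ℕ) (hx : 1 ≤ x) (hxn : x ≤ n) :
    ((Finset.Icc (x-1) (n-1)).filter
        (fun i => ∀ j : Fin n, i + 1 - x ≤ (j:ℕ) → (j:ℕ) ≤ i → T j ∉ A)).card
      = ∑ k ∈ Finset.Icc x n, (k - x + 1) *
          (((Finset.range n ×ˢ Finset.range n).filter
            (fun p => IsMaxGap T A p.1 p.2 ∧ p.2 - p.1 + 1 = k)).card) := by
  set W := Finset.Icc (x-1) (n-1) with hW
  set Av := W.filter (fun i => ∀ j : Fin n, i + 1 - x ≤ (j:ℕ) → (j:ℕ) ≤ i → T j ∉ A) with hAv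
  set MG := (Finset.range n ×ˢ Finset.range n).filter (fun p => IsMaxGap T A p.1 p.2) with hMG
  have hwin : ∀ i ∈ Av, IsGap T A (i + 1 - x) i := by
    intro i hi
    rw [hAv, Finset.mem_filter, hW, Finset.mem_Icc] at hi
    exact ⟨by omega, by omega, hi.2⟩
  set g : ℕ → ℕ × ℕ := fun i => mgap T A (i + 1 - x) i with hg
  have hmaps : ∀ i ∈ Av, g i ∈ MG := by
    intro i hi
    obtain ⟨hm, _, _⟩ := mgap_spec T A (hwin i hi)
    rw [hMG, Finset.mem_filter, Finset.mem_product, Finset.mem_range, Finset.mem_range]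
    exact ⟨⟨lt_of_le_of_lt hm.1.1 hm.1.2.1, hm.1.2.1⟩, hm⟩
  have hfiber : ∀ p ∈ MG, Av.filter (fun i => g i = p) = Finset.Icc (p.1 + (x-1)) p.2 := by
    intro p hp
    rw [hMG, Finset.mem_filter] at hp
    have hpm : IsMaxGap T A p.1 p.2 := hp.2
    ext i
    rw [Finset.mem_filter, Finset.mem_Icc]
    constructor
    · rintro ⟨hiAv, hgi⟩
      obtain ⟨hm, h1, h2⟩ := mgap_spec T A (hwin i hiAv)
      have hgi' : mgap T A (i + 1 - x) i = p := hgi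
      rw [hgi'] at hm h1 h2
      have hiW := (Finset.mem_filter.1 hiAv).1
      rw [hW, Finset.mem_Icc] at hiW
      omega
    · rintro ⟨h1, h2⟩
      have hgap := hpm.1
      have hab : p.1 ≤ p.2 := hgap.1
      have hbn : p.2 < n := hgap.2.1
      have hiAv : i ∈ Av := by
        rw [hAv, Finset.mem_filter, hW, Finset.mem_Icc]
        refine ⟨⟨by omega, by omega⟩, fun j hj1 hj2 => hgap.2.2 j (by omega) (by omega)⟩
      refine ⟨hiAv, ?_⟩
      obtain ⟨hm, hl, hr⟩ := mgap_spec T A (hwin i hiAv)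
      have := max_gap_unique T A (a := i + 1 - x) (b := i) hm hpm hl hr (by omega) (by omega) (by omega)
      show mgap T A (i + 1 - x) i = p
      exact Prod.ext this.1 this.2
  have hcard : Av.card = ∑ p ∈ MG, (p.2 + 1 - (p.1 + (x-1))) := by
    rw [Finset.card_eq_sum_card_fiberwise hmaps]
    exact Finset.sum_congr rfl fun p hp => by rw [hfiber p hp, Nat.card_Icc]
  rw [hcard]
  have hlenmaps : ∀ p ∈ MG, p.2 - p.1 + 1 ∈ Finset.Icc 0 n := by
    intro p hp
    rw [hMG, Finset.mem_filter] at hp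
    have h1 := hp.2.1.1
    have h2 := hp.2.1.2.1
    rw [Finset.mem_Icc]; omega
  rw [← Finset.sum_fiberwise_of_maps_to hlenmaps (fun p => p.2 + 1 - (p.1 + (x-1)))]
  have hinner : ∀ k ∈ Finset.Icc 0 n,
      ∑ p ∈ MG.filter (fun p => p.2 - p.1 + 1 = k), (p.2 + 1 - (p.1 + (x-1)))
        = (k - (x-1)) * (MG.filter (fun p => p.2 - p.1 + 1 = k)).card := by
    intro k _
    rw [Finset.sum_congr rfl (g := fun _ => k - (x-1)) ?_, Finset.sum_const, smul_eq_mul,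
      mul_comm]
    intro p hp
    rw [Finset.mem_filter, hMG, Finset.mem_filter] at hp
    have h1 := hp.1.2.1.1
    have h2 := hp.2
    show p.2 + 1 - (p.1 + (x-1)) = k - (x-1)
    omega
  rw [Finset.sum_congr rfl hinner]
  rw [← Finset.sum_subset (Finset.Icc_subset_Icc (Nat.zero_le x) le_rfl)
    (fun k _ hk => by
      rw [Finset.mem_Icc] at *
      have : k < x := by omega
      have : k - (x-1) = 0 := by omega
      simp [this])]
  apply Finset.sum_congr rfl
  intro k hk
  rw [Finset.mem_Icc] at hk
  rw [Finset.filter_filter]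
  congr 1
  omega


open scoped Classical in
lemma gapCount_eq (k : ℕ) :
    gapCount T A k = ((Finset.range n ×ˢ Finset.range n).filter
      (fun p => IsMaxGap T A p.1 p.2 ∧ p.2 - p.1 + 1 = k)).card := by
  rw [gapCount, ← Set.ncard_coe_finset]
  congr 1
  ext p
  simp only [Finset.coe_filter, Set.mem_setOf_eq, Finset.mem_product, Finset.mem_range]
  constructor
  · rintro ⟨hm, hk⟩
    exact ⟨⟨lt_of_le_of_lt hm.1.1 hm.1.2.1, hm.1.2.1⟩, hm, hk⟩
  · rintro ⟨_, hm, hk⟩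
    exact ⟨hm, hk⟩

lemma mem_inf'_iff {β : Type*} [DecidableEq β] (s : Finset 𝔸) (hs : s.Nonempty)
    (f : 𝔸 → Finset β) (b : β) : b ∈ s.inf' hs f ↔ ∀ e ∈ s, b ∈ f e := by
  simp only [← Finset.singleton_subset_iff, ← Finset.le_eq_subset, Finset.le_inf'_iff]

end Aux

/-- `co(T,I,x) = (n - x + 1) - Σ_{k=x}^{n} (k - x + 1) · H[k]`. -/
theorem coCount_eq_sub_histogram {𝔸 : Type*} [DecidableEq 𝔸] {n : ℕ}
    (T : Fin n → 𝔸) (I : Finset 𝔸) (hI : I.Nonempty) (x : ℕ) (hx : 1 ≤ x) (hxn : x ≤ n) :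
    (coCount T I x : ℤ) =
      ((n : ℤ) - x + 1) -
        ∑ k ∈ Finset.Icc x n, ((k : ℤ) - x + 1) * gapHistogram T I k := by
  classical
  have hn : 1 ≤ n := le_trans hx hxn
  -- coCount as a Finset cardinality
  have hco : coCount T I x
      = ((Finset.Icc (x-1) (n-1)).filter (fun i => coOccursIn T I i x)).card := by
    rw [coCount, ← Set.ncard_coe_finset]
    congr 1
    ext i
    simp [Finset.mem_Icc, and_assoc]
  -- the family of "bad" index sets
  set Bad : 𝔸 → Finset ℕ := fun e => (Finset.Icc (x-1) (n-1)).filter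
      (fun i => ∀ j : Fin n, i + 1 - x ≤ (j:ℕ) → (j:ℕ) ≤ i → T j ≠ e) with hBad
  have hbu : I.biUnion Bad
      = (Finset.Icc (x-1) (n-1)).filter (fun i => ¬ coOccursIn T I i x) := by
    ext i
    simp only [Finset.mem_biUnion, hBad, Finset.mem_filter]
    constructor
    · rintro ⟨e, heI, hiW, hpred⟩
      refine ⟨hiW, fun hcontra => ?_⟩
      obtain ⟨j, hj1, hj2, hj3⟩ := hcontra e heI
      exact hpred j hj1 hj2 hj3
    · rintro ⟨hiW, hnc⟩
      simp only [coOccursIn] at hnc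
      push_neg at hnc
      obtain ⟨e, heI, hp⟩ := hnc
      exact ⟨e, heI, hiW, fun j hj1 hj2 hj3 => (hp j hj1 hj2) hj3⟩
  have hsplit : ((Finset.Icc (x-1) (n-1)).filter (fun i => coOccursIn T I i x)).card
      + (I.biUnion Bad).card = (Finset.Icc (x-1) (n-1)).card := by
    rw [hbu]
    exact Finset.card_filter_add_card_filter_not _
  -- intersections of the bad sets
  have hinf : ∀ (A : Finset 𝔸) (hA : A.Nonempty), A.inf' hA Bad
      = (Finset.Icc (x-1) (n-1)).filter
          (fun i => ∀ j : Fin n, i + 1 - x ≤ (j:ℕ) → (j:ℕ) ≤ i → T j ∉ A) := by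
    intro A hA
    ext i
    rw [mem_inf'_iff]
    simp only [hBad, Finset.mem_filter]
    constructor
    · intro h
      obtain ⟨e0, he0⟩ := hA
      refine ⟨(h e0 he0).1, ?_⟩
      intro j hj1 hj2 hmem
      exact (h _ hmem).2 j hj1 hj2 rfl
    · rintro ⟨hiW, hp⟩ e heA
      exact ⟨hiW, fun j hj1 hj2 hje => hp j hj1 hj2 (hje ▸ heA)⟩
  -- inclusion–exclusion
  have hIE : ((I.biUnion Bad).card : ℤ)
      = ∑ A ∈ I.powerset.filter (fun A => A.Nonempty), (-1:ℤ)^(A.card+1) *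
          (((Finset.Icc (x-1) (n-1)).filter
            (fun i => ∀ j : Fin n, i + 1 - x ≤ (j:ℕ) → (j:ℕ) ≤ i → T j ∉ A)).card : ℤ) := by
    rw [Finset.inclusion_exclusion_card_biUnion I Bad]
    rw [Finset.univ_eq_attach,
      ← Finset.sum_attach (I.powerset.filter (fun A => A.Nonempty))
        (fun A => (-1:ℤ)^(A.card+1) *
          (((Finset.Icc (x-1) (n-1)).filter
            (fun i => ∀ j : Fin n, i + 1 - x ≤ (j:ℕ) → (j:ℕ) ≤ i → T j ∉ A)).card : ℤ))]
    apply Finset.sum_congr rfl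
    intro t _
    rw [hinf t.1 ((Finset.mem_filter.1 t.2).2)]
  -- per-itemset count
  have hA3 : ∀ A ∈ I.powerset.filter (fun A => A.Nonempty),
      (((Finset.Icc (x-1) (n-1)).filter
        (fun i => ∀ j : Fin n, i + 1 - x ≤ (j:ℕ) → (j:ℕ) ≤ i → T j ∉ A)).card : ℤ)
      = ∑ k ∈ Finset.Icc x n, ((k:ℤ) - x + 1) * (gapCount T A k : ℤ) := by
    intro A _
    have h0 := avoid_card T A x hx hxn
    have h1 := gapCount_eq T A
    rw [h0]
    push_cast
    refine Finset.sum_congr rfl fun k hk => ?_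
    rw [Finset.mem_Icc] at hk
    rw [← h1 k]
    congr 1
    omega
  -- swap the sums
  have hswap : ∑ A ∈ I.powerset.filter (fun A => A.Nonempty), (-1:ℤ)^(A.card+1) *
        ∑ k ∈ Finset.Icc x n, ((k:ℤ) - x + 1) * (gapCount T A k : ℤ)
      = ∑ k ∈ Finset.Icc x n, ((k:ℤ) - x + 1) * gapHistogram T I k := by
    simp_rw [gapHistogram, Finset.mul_sum]
    rw [Finset.sum_comm]
    apply Finset.sum_congr rfl
    intro A _
    apply Finset.sum_congr rfl
    intro k _
    ring
  have hWc : ((Finset.Icc (x-1) (n-1)).card : ℤ) = (n:ℤ) - x + 1 := by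
    rw [Nat.card_Icc]
    omega
  rw [hco, ← hswap]
  have hAll : ∑ A ∈ I.powerset.filter (fun A => A.Nonempty), (-1:ℤ)^(A.card+1) *
        ∑ k ∈ Finset.Icc x n, ((k:ℤ) - x + 1) * (gapCount T A k : ℤ)
      = ((I.biUnion Bad).card : ℤ) := by
    rw [hIE]
    exact (Finset.sum_congr rfl fun A hA => by rw [hA3 A hA]).symm
  rw [hAll]
  omega
end

section
/- Let I be a nonempty finite set and let f : I → ℕ be injective. Then for every k ∈ ℕ, Σ_{∅ ≠ A ⊆ I, min_A f = k} (−1)^{|A|+1} equals 1 if k = max_{e∈I} f(e) and equals 0 otherwise. (This is the end-of-sequence update of the paper: when all gaps close at the end of the sequence, the net histogram update is +1 at the tesla value of the item seen furthest in the past and 0 elsewhere.) -/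
/-- `min_A f` : the minimum of `f` over the (nonempty) finite set `A`. -/
noncomputable def sigMinOn {α : Type*} (f : α → ℕ) (A : Finset α) : ℕ :=
  sInf (f '' ↑A)

lemma minOn_eq_iff {α : Type*} {f : α → ℕ} {A : Finset α} (hA : A.Nonempty) {k : ℕ} :
    sigMinOn f A = k ↔ (∃ a ∈ A, f a = k) ∧ ∀ a ∈ A, k ≤ f a := by
  have hne : (f '' ↑A).Nonempty := by
    obtain ⟨a, ha⟩ := hA
    exact ⟨f a, ⟨a, by simpa using ha, rfl⟩⟩
  constructor
  · rintro rfl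
    refine ⟨?_, fun a ha => Nat.sInf_le ⟨a, by simpa using ha, rfl⟩⟩
    obtain ⟨a, ha, hfa⟩ := Nat.sInf_mem hne
    exact ⟨a, by simpa using ha, hfa⟩
  · rintro ⟨⟨a, ha, rfl⟩, hub⟩
    refine le_antisymm (Nat.sInf_le ⟨a, by simpa using ha, rfl⟩) ?_
    refine le_csInf hne ?_
    rintro x ⟨b, hb, rfl⟩
    exact hub b (by simpa using hb)

/-- End-of-sequence update: the signed count over all nonempty subsets `A ⊆ I`
with `min_A f = k` is `+1` at `k = max_{e ∈ I} f e` and `0` elsewhere. -/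
theorem signed_count_end {α : Type*} [DecidableEq α]
    (I : Finset α) (hI : I.Nonempty) (f : α → ℕ) (hf : Set.InjOn f ↑I) (k : ℕ) :
    ∑ A ∈ I.powerset.filter (fun A => A.Nonempty ∧ sigMinOn f A = k),
        (-1 : ℤ) ^ (A.card + 1) =
      if k = I.sup f then 1 else 0 := by
  classical
  by_cases hk : ∃ e ∈ I, f e = k
  · obtain ⟨e, heI, hfe⟩ := hk
    set S : Finset α := I.filter (fun x => k < f x) with hS
    -- bijection B ⊆ S ↦ insert e B
    have hsum : ∑ A ∈ I.powerset.filter (fun A => A.Nonempty ∧ sigMinOn f A = k),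
        (-1 : ℤ) ^ (A.card + 1) = ∑ B ∈ S.powerset, (-1 : ℤ) ^ B.card := by
      refine Finset.sum_nbij' (fun A => A.erase e) (fun B => insert e B) ?_ ?_ ?_ ?_ ?_
      · intro A hA
        simp only [Finset.mem_filter, Finset.mem_powerset] at hA
        obtain ⟨hAI, hAne, hmin⟩ := hA
        rw [minOn_eq_iff hAne] at hmin
        obtain ⟨⟨a, haA, hfa⟩, hub⟩ := hmin
        have hae : a = e := hf (hAI haA) heI (hfa.trans hfe.symm)
        subst hae
        simp only [Finset.mem_powerset]
        intro x hx
        rw [Finset.mem_erase] at hx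
        rw [hS, Finset.mem_filter]
        refine ⟨hAI hx.2, lt_of_le_of_ne (hub x hx.2) ?_⟩
        intro h
        exact hx.1 (hf (hAI hx.2) heI (by rw [hfe, ← h]))
      · intro B hB
        simp only [Finset.mem_powerset] at hB
        have hBI : B ⊆ I := fun x hx => (Finset.mem_filter.mp (hB hx)).1
        have heB : e ∉ B := by
          intro h
          have := (Finset.mem_filter.mp (hB h)).2
          omega
        simp only [Finset.mem_filter, Finset.mem_powerset]
        refine ⟨Finset.insert_subset heI hBI, ⟨e, Finset.mem_insert_self e B⟩, ?_⟩
        rw [minOn_eq_iff ⟨e, Finset.mem_insert_self e B⟩]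
        refine ⟨⟨e, Finset.mem_insert_self e B, hfe⟩, ?_⟩
        intro a ha
        rcases Finset.mem_insert.mp ha with rfl | h
        · exact hfe.ge
        · exact le_of_lt (Finset.mem_filter.mp (hB h)).2
      · intro A hA
        simp only [Finset.mem_filter, Finset.mem_powerset] at hA
        obtain ⟨hAI, hAne, hmin⟩ := hA
        rw [minOn_eq_iff hAne] at hmin
        obtain ⟨⟨a, haA, hfa⟩, hub⟩ := hmin
        have hae : a = e := hf (hAI haA) heI (hfa.trans hfe.symm)
        subst hae
        exact Finset.insert_erase haA
      · intro B hB
        simp only [Finset.mem_powerset] at hB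
        have heB : e ∉ B := by
          intro h
          have := (Finset.mem_filter.mp (hB h)).2
          omega
        exact Finset.erase_insert heB
      · intro A hA
        simp only [Finset.mem_filter, Finset.mem_powerset] at hA
        obtain ⟨hAI, hAne, hmin⟩ := hA
        rw [minOn_eq_iff hAne] at hmin
        obtain ⟨⟨a, haA, hfa⟩, hub⟩ := hmin
        have hae : a = e := hf (hAI haA) heI (hfa.trans hfe.symm)
        subst hae
        rw [Finset.card_erase_of_mem haA]
        have : 1 ≤ A.card := Finset.card_pos.mpr hAne
        rw [show A.card - 1 = A.card + 1 - 2 by omega]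
        rw [show A.card + 1 = (A.card + 1 - 2) + 2 by omega, pow_add]
        simp
    rw [hsum, Finset.sum_powerset_neg_one_pow_card]
    have hle : k ≤ I.sup f := hfe ▸ Finset.le_sup heI
    have : (S = ∅) ↔ k = I.sup f := by
      rw [Finset.eq_empty_iff_forall_notMem]
      constructor
      · intro h
        refine le_antisymm hle (Finset.sup_le fun x hx => ?_)
        by_contra hc
        exact h x (Finset.mem_filter.mpr ⟨hx, by omega⟩)
      · intro h x hx
        rw [hS, Finset.mem_filter] at hx
        have := Finset.le_sup (f := f) hx.1
        omega
    simp [this]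
  · push_neg at hk
    have h1 : I.powerset.filter (fun A => A.Nonempty ∧ sigMinOn f A = k) = ∅ := by
      rw [Finset.eq_empty_iff_forall_notMem]
      intro A hA
      simp only [Finset.mem_filter, Finset.mem_powerset] at hA
      obtain ⟨hAI, hAne, hmin⟩ := hA
      rw [minOn_eq_iff hAne] at hmin
      obtain ⟨⟨a, haA, hfa⟩, _⟩ := hmin
      exact hk a (hAI haA) hfa
    have h2 : k ≠ I.sup f := by
      intro h
      obtain ⟨e, heI, hfe⟩ := Finset.exists_mem_eq_sup I hI f
      exact hk e heI (h ▸ hfe.symm)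
    simp [h1, h2]
end

section
/- Let I be a finite set, let f : I → ℕ be injective, and let X be a nonempty subset of I such that there exists e₀ ∈ I∖X with f(e₀) > f(a) for every a ∈ X (the item of I seen furthest in the past does not lie in X). Then for every k ∈ ℕ, Σ_{A ⊆ I, A ∩ X ≠ ∅, min_A f = k} (−1)^{|A|+1} = 0. (This is the 'no update' case of Theorem 6 of the paper.) -/
/-- `min_A f` : the minimum of `f` over the (nonempty) finite set `A`. -/
noncomputable def finsetMinOn {α : Type*} (f : α → ℕ) (A : Finset α) : ℕ :=
  sInf (f '' ↑A)

lemma minOn_eq_inf' {α : Type*} (f : α → ℕ) (A : Finset α) (hA : A.Nonempty) :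
    finsetMinOn f A = A.inf' hA f := (Finset.inf'_eq_csInf_image A hA f).symm

lemma minOn_insert {α : Type*} [DecidableEq α] (f : α → ℕ) (A : Finset α)
    (hA : A.Nonempty) (e : α) (h : ∃ a ∈ A, f a < f e) :
    finsetMinOn f (insert e A) = finsetMinOn f A := by
  rw [minOn_eq_inf' f A hA, minOn_eq_inf' f (insert e A) (Finset.insert_nonempty e A),
    Finset.inf'_insert (H := hA)]
  obtain ⟨a, ha, hfa⟩ := h
  have : A.inf' hA f ≤ f a := Finset.inf'_le f ha
  omega

/-- 'No update' case of Theorem 6: if some item `e₀ ∈ I \ X` was seen further in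
the past than every item of `X`, then for every `k` the signed count of subsets
`A ⊆ I` meeting `X` with `min_A f = k` vanishes. -/
theorem signed_count_multi_zero {α : Type*} [DecidableEq α]
    (I : Finset α) (f : α → ℕ) (hf : Set.InjOn f ↑I)
    (X : Finset α) (hXne : X.Nonempty) (hX : X ⊆ I)
    (hsep : ∃ e₀ ∈ I \ X, ∀ a ∈ X, f a < f e₀) (k : ℕ) :
    ∑ A ∈ I.powerset.filter (fun A => (A ∩ X).Nonempty ∧ finsetMinOn f A = k),
      (-1 : ℤ) ^ (A.card + 1) = 0 := by
  obtain ⟨e₀, he₀, hbig⟩ := hsep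
  rw [Finset.mem_sdiff] at he₀
  obtain ⟨he₀I, he₀X⟩ := he₀
  refine Finset.sum_involution (fun A _ => if e₀ ∈ A then A.erase e₀ else insert e₀ A)
    ?hpair ?hne ?hmem ?hinv
  case hpair =>
    intro A hA
    simp only [Finset.mem_filter, Finset.mem_powerset] at hA
    by_cases h : e₀ ∈ A
    · simp only [h, if_true]
      rw [Finset.card_erase_of_mem h]
      have hc : 1 ≤ A.card := Finset.card_pos.mpr ⟨e₀, h⟩
      rw [show A.card - 1 + 1 = A.card by omega]
      have : (-1 : ℤ) ^ (A.card + 1) = -(-1 : ℤ) ^ A.card := by ring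
      rw [this]; ring
    · simp only [h, if_false]
      rw [Finset.card_insert_of_notMem h]
      ring
  case hne =>
    intro A hA _
    by_cases h : e₀ ∈ A
    · simp only [h, if_true]
      intro heq
      exact (Finset.notMem_erase e₀ A) (heq.symm ▸ h)
    · simp only [h, if_false]
      intro heq
      exact h (heq ▸ Finset.mem_insert_self e₀ A)
  case hmem =>
    intro A hA
    simp only [Finset.mem_filter, Finset.mem_powerset] at hA ⊢
    obtain ⟨hAI, hAX, hmin⟩ := hA
    obtain ⟨a, haAX⟩ := hAX
    rw [Finset.mem_inter] at haAX
    have hane : a ≠ e₀ := fun h => he₀X (h ▸ haAX.2)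
    by_cases h : e₀ ∈ A
    · simp only [h, if_true]
      have haE : a ∈ A.erase e₀ := Finset.mem_erase.mpr ⟨hane, haAX.1⟩
      refine ⟨(Finset.erase_subset _ _).trans hAI, ⟨a, Finset.mem_inter.mpr ⟨haE, haAX.2⟩⟩, ?_⟩
      have hEne : (A.erase e₀).Nonempty := ⟨a, haE⟩
      have : A = insert e₀ (A.erase e₀) := (Finset.insert_erase h).symm
      rw [← hmin]
      conv_rhs => rw [this]
      rw [minOn_insert f _ hEne e₀ ⟨a, haE, hbig a haAX.2⟩]
    · simp only [h, if_false]
      refine ⟨Finset.insert_subset he₀I hAI, ⟨a, Finset.mem_inter.mpr ⟨Finset.mem_insert_of_mem haAX.1, haAX.2⟩⟩, ?_⟩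
      rw [minOn_insert f A ⟨a, haAX.1⟩ e₀ ⟨a, haAX.1, hbig a haAX.2⟩, hmin]
  case hinv =>
    intro A hA
    by_cases h : e₀ ∈ A
    · simp [h]
    · simp [h, Finset.erase_insert h]
end
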